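/- Let R = ℝ[t, t⁻¹] and let v ∈ SL₂(R) be the matrix v = [[1 + (1+t)(1+t⁻¹), 1+t], [1+t⁻¹, 1]]. Then the characteristic polynomial of v equals X² − (t + 4 + t⁻¹)X + 1, and v is not conjugate within GL₂(R) to any diagonal matrix over R. In particular, v is not conjugate within SL₂(R) to a diagonal matrix with entries in ℝ. -/

import Mathlib

open Polynomial LaurentPolynomial Matrix

lemma unit_form (p q : LaurentPolynomial ℝ) (h : p * q = 1) :
    ∃ (c : ℝ) (n : ℤ), c ≠ 0 ∧ p = LaurentPolynomial.C c * LaurentPolynomial.T n := by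
  obtain ⟨m, p', hp'⟩ := p.exists_T_pow
  obtain ⟨k, q', hq'⟩ := q.exists_T_pow
  have hmul : p' * q' = X ^ (m + k) := by
    apply Polynomial.toLaurent_injective
    rw [_root_.map_mul, hp', hq', Polynomial.toLaurent_X_pow]
    calc p * T (m:ℤ) * (q * T (k:ℤ)) = p * q * (T (m:ℤ) * T (k:ℤ)) := by ring
    _ = T ((m:ℤ)+(k:ℤ)) := by rw [h, one_mul, ← T_add]
    _ = T ((m+k : ℕ) : ℤ) := by push_cast; ring_nf
  have hdvd : p' ∣ X ^ (m + k) := ⟨q', hmul.symm⟩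
  obtain ⟨i, -, hi⟩ := (dvd_prime_pow Polynomial.prime_X _).mp hdvd
  obtain ⟨u, hu⟩ := hi
  obtain ⟨c, hcu, hc⟩ := Polynomial.isUnit_iff.mp u.isUnit
  have hcne : c ≠ 0 := hcu.ne_zero
  refine ⟨c⁻¹, (i : ℤ) - m, inv_ne_zero hcne, ?_⟩
  rw [← hc] at hu
  have hp'' : p' = Polynomial.C c⁻¹ * X ^ i := by
    have h5 : p' * Polynomial.C c * Polynomial.C c⁻¹ = X ^ i * Polynomial.C c⁻¹ := by rw [hu]
    rw [mul_assoc, ← Polynomial.C_mul, mul_inv_cancel₀ hcne, Polynomial.C_1, mul_one] at h5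
    rw [h5]; ring
  have h2 : p * T (m:ℤ) = LaurentPolynomial.C c⁻¹ * T (i:ℤ) := by
    rw [← hp', hp'', _root_.map_mul, Polynomial.toLaurent_C, Polynomial.toLaurent_X_pow]
  have h3 : p = p * T (m:ℤ) * T (-(m:ℤ)) := by
    rw [mul_T_assoc]; simp
  rw [h3, h2, mul_assoc, ← T_add, ← sub_eq_add_neg]

lemma key (a b : LaurentPolynomial ℝ) (hab : a * b = 1) :
    a + b ≠ LaurentPolynomial.T 1 + 4 + LaurentPolynomial.T (-1) := by
  obtain ⟨c, n, hc, rfl⟩ := unit_form a b hab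
  have hb : b = LaurentPolynomial.C c⁻¹ * T (-n) := by
    have h1 : (LaurentPolynomial.C c⁻¹ * T (-n)) * (LaurentPolynomial.C c * T n) = 1 := by
      rw [show LaurentPolynomial.C c⁻¹ * T (-n) * (LaurentPolynomial.C c * T n)
        = LaurentPolynomial.C c⁻¹ * LaurentPolynomial.C c * (T (-n) * T n) by ring,
        ← _root_.map_mul, ← T_add, inv_mul_cancel₀ hc]
      simp
    calc b = (LaurentPolynomial.C c⁻¹ * T (-n)) * (LaurentPolynomial.C c * T n) * b := by
            rw [h1, one_mul]
    _ = (LaurentPolynomial.C c⁻¹ * T (-n)) * ((LaurentPolynomial.C c * T n) * b) := by ring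
    _ = _ := by rw [hab, mul_one]
  subst hb
  intro heq
  have h4 : (4 : LaurentPolynomial ℝ) = LaurentPolynomial.C 4 := by
    rw [map_ofNat]
  rw [h4, ← single_eq_C_mul_T, ← single_eq_C_mul_T] at heq
  by_cases hn : n = 0
  · have h5 := congrArg (fun f : LaurentPolynomial ℝ => f.coeff 1) heq
    simp only [AddMonoidAlgebra.coeff_add, AddMonoidAlgebra.coeff_single] at h5
    rw [Finsupp.add_apply, Finsupp.add_apply, Finsupp.add_apply, Finsupp.single_apply,
      Finsupp.single_apply, T_apply, T_apply, C_apply] at h5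
    rw [hn] at h5
    norm_num at h5
  · have h5 := congrArg (fun f : LaurentPolynomial ℝ => f.coeff 0) heq
    simp only [AddMonoidAlgebra.coeff_add, AddMonoidAlgebra.coeff_single] at h5
    rw [Finsupp.add_apply, Finsupp.add_apply, Finsupp.add_apply, Finsupp.single_apply,
      Finsupp.single_apply, T_apply, T_apply, C_apply] at h5
    simp [hn, neg_eq_zero] at h5

lemma my_charpoly_fin_two {R : Type*} [CommRing R] (M : Matrix (Fin 2) (Fin 2) R) :
    M.charpoly = X ^ 2 - Polynomial.C M.trace * X + Polynomial.C M.det := by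
  rw [Matrix.charpoly, Matrix.det_fin_two, Matrix.charmatrix_apply_eq,
    Matrix.charmatrix_apply_eq, Matrix.charmatrix_apply_ne _ _ _ (by decide),
    Matrix.charmatrix_apply_ne _ _ _ (by decide), Matrix.trace_fin_two, Matrix.det_fin_two]
  simp only [map_add, _root_.map_mul, map_sub]
  ring

/-- For `R = ℝ[t,t⁻¹]` and
`v = [[1 + (1+t)(1+t⁻¹), 1+t], [1+t⁻¹, 1]]` (an element of `SL₂(R)`), the characteristic
polynomial of `v` is `X² − (t + 4 + t⁻¹)·X + 1`, and `v` is not conjugate within `GL₂(R)`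
to any diagonal matrix over `R`; in particular not within `SL₂(R)` to a diagonal matrix
with entries in `ℝ`. -/
theorem laurent_twist_not_diagonalizable
    (v : Matrix (Fin 2) (Fin 2) (LaurentPolynomial ℝ))
    (hv : v = !![1 + (1 + LaurentPolynomial.T 1) * (1 + LaurentPolynomial.T (-1)),
                 1 + LaurentPolynomial.T 1;
                 1 + LaurentPolynomial.T (-1), 1]) :
    v.det = 1 ∧
    v.charpoly
      = Polynomial.X ^ 2
        - Polynomial.C (LaurentPolynomial.T 1 + 4 + LaurentPolynomial.T (-1)) * Polynomial.X
        + 1 ∧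
    (∀ g : GL (Fin 2) (LaurentPolynomial ℝ), ∀ d : Fin 2 → LaurentPolynomial ℝ,
      (g : Matrix (Fin 2) (Fin 2) (LaurentPolynomial ℝ)) * v
          * ((g⁻¹ : GL (Fin 2) (LaurentPolynomial ℝ)) : Matrix (Fin 2) (Fin 2) (LaurentPolynomial ℝ))
        ≠ Matrix.diagonal d) ∧
    (∀ g : Matrix.SpecialLinearGroup (Fin 2) (LaurentPolynomial ℝ), ∀ d : Fin 2 → ℝ,
      (g : Matrix (Fin 2) (Fin 2) (LaurentPolynomial ℝ)) * v
          * ((g⁻¹ : Matrix.SpecialLinearGroup (Fin 2) (LaurentPolynomial ℝ))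
              : Matrix (Fin 2) (Fin 2) (LaurentPolynomial ℝ))
        ≠ Matrix.diagonal (fun i => algebraMap ℝ (LaurentPolynomial ℝ) (d i))) := by
  have hT : (LaurentPolynomial.T 1 : LaurentPolynomial ℝ) * LaurentPolynomial.T (-1) = 1 := by
    rw [← T_add]; norm_num
  have hdet : v.det = 1 := by
    rw [hv, det_fin_two_of]; ring
  have htr : v.trace = LaurentPolynomial.T 1 + 4 + LaurentPolynomial.T (-1) := by
    rw [hv, trace_fin_two_of]; linear_combination hT
  refine ⟨hdet, ?_, ?_, ?_⟩
  · rw [my_charpoly_fin_two, hdet, htr, Polynomial.C_1]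
  · intro g d h
    have hinv : ((g⁻¹ : GL (Fin 2) (LaurentPolynomial ℝ)) : Matrix (Fin 2) (Fin 2) (LaurentPolynomial ℝ))
        * (g : Matrix (Fin 2) (Fin 2) (LaurentPolynomial ℝ)) = 1 := by
      rw [← Matrix.GeneralLinearGroup.coe_mul, inv_mul_cancel g,
        Matrix.GeneralLinearGroup.coe_one]
    have hinv' : (g : Matrix (Fin 2) (Fin 2) (LaurentPolynomial ℝ))
        * ((g⁻¹ : GL (Fin 2) (LaurentPolynomial ℝ)) : Matrix (Fin 2) (Fin 2) (LaurentPolynomial ℝ)) = 1 := by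
      rw [← Matrix.GeneralLinearGroup.coe_mul, mul_inv_cancel g,
        Matrix.GeneralLinearGroup.coe_one]
    have htr2 : (Matrix.diagonal d).trace = v.trace := by
      rw [← h, trace_mul_comm, ← mul_assoc, hinv, one_mul]
    have hdet2 : (Matrix.diagonal d).det = 1 := by
      rw [← h, det_mul, det_mul]
      calc (g : Matrix (Fin 2) (Fin 2) (LaurentPolynomial ℝ)).det * v.det
            * ((g⁻¹ : GL (Fin 2) (LaurentPolynomial ℝ)) : Matrix (Fin 2) (Fin 2) (LaurentPolynomial ℝ)).det
          = ((g : Matrix (Fin 2) (Fin 2) (LaurentPolynomial ℝ))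
              * ((g⁻¹ : GL (Fin 2) (LaurentPolynomial ℝ)) : Matrix (Fin 2) (Fin 2) (LaurentPolynomial ℝ))).det
            * v.det := by rw [det_mul]; ring
        _ = 1 := by rw [hinv', det_one, one_mul, hdet]
    rw [trace_diagonal, Fin.sum_univ_two, htr] at htr2
    rw [det_diagonal, Fin.prod_univ_two] at hdet2
    exact key (d 0) (d 1) hdet2 htr2
  · intro g d h
    have hinv : ((g⁻¹ : Matrix.SpecialLinearGroup (Fin 2) (LaurentPolynomial ℝ))
          : Matrix (Fin 2) (Fin 2) (LaurentPolynomial ℝ)) * (g : Matrix (Fin 2) (Fin 2) (LaurentPolynomial ℝ)) = 1 := by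
      rw [← Matrix.SpecialLinearGroup.coe_mul, inv_mul_cancel,
        Matrix.SpecialLinearGroup.coe_one]
    have hinv' : (g : Matrix (Fin 2) (Fin 2) (LaurentPolynomial ℝ))
        * ((g⁻¹ : Matrix.SpecialLinearGroup (Fin 2) (LaurentPolynomial ℝ))
          : Matrix (Fin 2) (Fin 2) (LaurentPolynomial ℝ)) = 1 := by
      rw [← Matrix.SpecialLinearGroup.coe_mul, mul_inv_cancel,
        Matrix.SpecialLinearGroup.coe_one]
    have htr2 : (Matrix.diagonal
        (fun i => algebraMap ℝ (LaurentPolynomial ℝ) (d i))).trace = v.trace := by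
      rw [← h, trace_mul_comm, ← mul_assoc, hinv, one_mul]
    have hdet2 : (Matrix.diagonal
        (fun i => algebraMap ℝ (LaurentPolynomial ℝ) (d i))).det = 1 := by
      rw [← h, det_mul, det_mul]
      calc (g : Matrix (Fin 2) (Fin 2) (LaurentPolynomial ℝ)).det * v.det
            * ((g⁻¹ : Matrix.SpecialLinearGroup (Fin 2) (LaurentPolynomial ℝ))
              : Matrix (Fin 2) (Fin 2) (LaurentPolynomial ℝ)).det
          = ((g : Matrix (Fin 2) (Fin 2) (LaurentPolynomial ℝ))
              * ((g⁻¹ : Matrix.SpecialLinearGroup (Fin 2) (LaurentPolynomial ℝ))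
                : Matrix (Fin 2) (Fin 2) (LaurentPolynomial ℝ))).det * v.det := by rw [det_mul]; ring
        _ = 1 := by rw [hinv', det_one, one_mul, hdet]
    rw [trace_diagonal, Fin.sum_univ_two, htr] at htr2
    rw [det_diagonal, Fin.prod_univ_two] at hdet2
    exact key _ _ hdet2 htr2
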